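/- Let n ≥ 2 and let H be the hypergraph with vertex set V = {1, …, n} and the single hyperedge V. Then the radio cover time of the simple random walk on H equals 1, while its cover time equals n · H_{n−1}, where H_{n−1} = Σ_{i=1}^{n−1} 1/i is the (n−1)-st harmonic number; in particular the ratio C/C̃ is Θ(n log n), so the O(n log n) bound on the radio speedup of the cover time is tight. -/

import Mathlib

open scoped ENNReal Classical
open Finset

/-- A hypergraph: a finite nonempty family of nonempty hyperedges over a finite vertex set. -/
structure FinHypergraph (V : Type) [Fintype V] [DecidableEq V] where
  edges : Finset (Finset V)
  edges_nonempty : edges.Nonempty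
  mem_nonempty : ∀ e ∈ edges, e.Nonempty

namespace FinHypergraph

variable {V : Type} [Fintype V] [DecidableEq V]

/-- The degree `d(v)` of a vertex: the number of hyperedges containing it. -/
def degV (H : FinHypergraph V) (v : V) : ℕ := (H.edges.filter (fun e => v ∈ e)).card

/-- The rank of a hypergraph: the maximum cardinality of a hyperedge. -/
def rank (H : FinHypergraph V) : ℕ := H.edges.sup Finset.card

/-- Connectivity: every vertex lies in some hyperedge, and any two vertices are joined
by a hyperpath (consecutive vertices share a hyperedge). -/
def Connected (H : FinHypergraph V) : Prop :=
  (∀ v : V, ∃ e ∈ H.edges, v ∈ e) ∧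
    ∀ u v : V, Relation.ReflTransGen (fun a b => ∃ e ∈ H.edges, a ∈ e ∧ b ∈ e) u v

/-- One step of the simple random walk: from vertex `v`, the probability of choosing
hyperedge `p.1` (uniform among the edges containing `v`) and then vertex `p.2`
(uniform inside `p.1`). -/
noncomputable def stepProb (H : FinHypergraph V) (v : V) (p : Finset V × V) : ℝ≥0∞ :=
  if p.1 ∈ H.edges ∧ v ∈ p.1 ∧ p.2 ∈ p.1 then
    ((H.degV v : ℝ≥0∞) * (p.1.card : ℝ≥0∞))⁻¹ else 0

/-- The vertex visited at time `s` along a trajectory `w` (a list of (edge, next vertex)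
pairs) started at `v`; `vAt v w 0 = v`. -/
def vAt (v : V) {t : ℕ} (w : Fin t → Finset V × V) : ℕ → V
  | 0 => v
  | s + 1 => if h : s < t then (w ⟨s, h⟩).2 else v

/-- Probability of a finite trajectory of the simple random walk started at `v`. -/
noncomputable def trajProb (H : FinHypergraph V) (v : V) {t : ℕ}
    (w : Fin t → Finset V × V) : ℝ≥0∞ :=
  ∏ s : Fin t, H.stepProb (vAt v w s) (w s)

/-- Probability that the length-`t` trajectory of the walk started at `v` satisfies `A`. -/
noncomputable def pr (H : FinHypergraph V) (v : V) (t : ℕ)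
    (A : (Fin t → Finset V × V) → Prop) : ℝ≥0∞ :=
  ∑ w : Fin t → Finset V × V, if A w then H.trajProb v w else 0

/-- Expected cover time from `v`: `E[max_u T_v^u] = ∑_t Pr[some vertex unvisited by time t]`. -/
noncomputable def coverFrom (H : FinHypergraph V) (v : V) : ℝ≥0∞ :=
  ∑' t : ℕ, H.pr v t (fun w => ∃ u : V, ∀ s : ℕ, s ≤ t → vAt v w s ≠ u)

/-- The cover time `C` of the hypergraph. -/
noncomputable def coverTime (H : FinHypergraph V) : ℝ≥0∞ := ⨆ v : V, H.coverFrom v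

/-- Expected radio cover time from `v`: `u` has heard the walk by time `t` iff `u = X(0)`
or `u ∈ e(s)` for some `s < t`. -/
noncomputable def radioCoverFrom (H : FinHypergraph V) (v : V) : ℝ≥0∞ :=
  ∑' t : ℕ, H.pr v t (fun w => ∃ u : V, u ≠ v ∧ ∀ s : Fin t, u ∉ (w s).1)

/-- The radio cover time `C̃` of the hypergraph. -/
noncomputable def radioCoverTime (H : FinHypergraph V) : ℝ≥0∞ := ⨆ v : V, H.radioCoverFrom v

/-- The hitting time `h(v,u) = E[inf{t : X(t) = u}]`. -/
noncomputable def hitting (H : FinHypergraph V) (v u : V) : ℝ≥0∞ :=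
  ∑' t : ℕ, H.pr v t (fun w => ∀ s : ℕ, s ≤ t → vAt v w s ≠ u)

/-- The radio hitting time `h̃(v,u)`: expected first time by which `u` has heard the walk. -/
noncomputable def radioHitting (H : FinHypergraph V) (v u : V) : ℝ≥0∞ :=
  ∑' t : ℕ, H.pr v t (fun w => u ≠ v ∧ ∀ s : Fin t, u ∉ (w s).1)

/-- The maximum hitting time `h_max`. -/
noncomputable def maxHitting (H : FinHypergraph V) : ℝ≥0∞ := ⨆ v : V, ⨆ u : V, H.hitting v u

/-- The maximum radio hitting time `h̃_max`. -/
noncomputable def maxRadioHitting (H : FinHypergraph V) : ℝ≥0∞ :=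
  ⨆ v : V, ⨆ u : V, H.radioHitting v u

end FinHypergraph

/-- The hypergraph on `Fin n` with the single hyperedge consisting of all vertices. -/
def singleEdgeHG (n : ℕ) (hn : 0 < n) : FinHypergraph (Fin n) where
  edges := {(Finset.univ : Finset (Fin n))}
  edges_nonempty := Finset.singleton_nonempty _
  mem_nonempty := by
    intro e he
    rw [Finset.mem_singleton] at he
    subst he
    haveI : Nonempty (Fin n) := Fin.pos_iff_nonempty.mp hn
    exact Finset.univ_nonempty

section Aux

variable {n : ℕ}

lemma singleEdge_degV (hn : 0 < n) (v : Fin n) : (singleEdgeHG n hn).degV v = 1 := by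
  simp [FinHypergraph.degV, singleEdgeHG, Finset.filter_singleton]

lemma singleEdge_stepProb (hn : 0 < n) (v : Fin n) (p : Finset (Fin n) × Fin n) :
    (singleEdgeHG n hn).stepProb v p =
      if p.1 = Finset.univ then ((n : ℝ≥0∞))⁻¹ else 0 := by
  by_cases h : p.1 = Finset.univ
  · simp [FinHypergraph.stepProb, singleEdgeHG, h, FinHypergraph.degV, Finset.filter_singleton,
      Finset.card_univ]
  · simp [FinHypergraph.stepProb, singleEdgeHG, h]

lemma singleEdge_trajProb (hn : 0 < n) (v : Fin n) {t : ℕ}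
    (w : Fin t → Finset (Fin n) × Fin n) :
    (singleEdgeHG n hn).trajProb v w =
      if ∀ s : Fin t, (w s).1 = Finset.univ then ((n : ℝ≥0∞))⁻¹ ^ t else 0 := by
  unfold FinHypergraph.trajProb
  by_cases h : ∀ s : Fin t, (w s).1 = Finset.univ
  · rw [if_pos h]
    calc ∏ s : Fin t, (singleEdgeHG n hn).stepProb (FinHypergraph.vAt v w ↑s) (w s)
        = ∏ _s : Fin t, ((n : ℝ≥0∞))⁻¹ := by
          apply Finset.prod_congr rfl
          intro s _
          rw [singleEdge_stepProb, if_pos (h s)]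
      _ = ((n : ℝ≥0∞))⁻¹ ^ t := by
          rw [Finset.prod_const, Finset.card_univ, Fintype.card_fin]
  · rw [if_neg h]
    push_neg at h
    obtain ⟨s, hs⟩ := h
    apply Finset.prod_eq_zero (Finset.mem_univ s)
    rw [singleEdge_stepProb, if_neg hs]

lemma singleEdge_pr (hn : 0 < n) (v : Fin n) (t : ℕ)
    (A : (Fin t → Finset (Fin n) × Fin n) → Prop) :
    (singleEdgeHG n hn).pr v t A =
      ∑ x : Fin t → Fin n,
        if A (fun s => ((Finset.univ : Finset (Fin n)), x s)) then ((n : ℝ≥0∞))⁻¹ ^ t else 0 := by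
  unfold FinHypergraph.pr
  rw [← Equiv.sum_comp (Equiv.arrowProdEquivProdArrow (Fin t) (fun _ => Finset (Fin n)) (fun _ => Fin n)).symm
      (fun w => if A w then (singleEdgeHG n hn).trajProb v w else 0)]
  rw [Fintype.sum_prod_type]
  rw [Fintype.sum_eq_single (fun _ : Fin t => (Finset.univ : Finset (Fin n)))]
  · apply Finset.sum_congr rfl
    intro x _
    have he : (Equiv.arrowProdEquivProdArrow (Fin t) (fun _ => Finset (Fin n)) (fun _ => Fin n)).symm
        (fun _ => Finset.univ, x) = fun s => ((Finset.univ : Finset (Fin n)), x s) := rfl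
    rw [he, singleEdge_trajProb]
    by_cases hA : A (fun s => ((Finset.univ : Finset (Fin n)), x s))
    · rw [if_pos hA, if_pos hA, if_pos (fun _ => rfl)]
    · rw [if_neg hA, if_neg hA]
  · intro b hb
    apply Finset.sum_eq_zero
    intro x _
    have he : (Equiv.arrowProdEquivProdArrow (Fin t) (fun _ => Finset (Fin n)) (fun _ => Fin n)).symm
        (b, x) = fun s => (b s, x s) := rfl
    rw [he, singleEdge_trajProb]
    have hnot : ¬ ∀ s : Fin t, ((fun s => (b s, x s)) s).1 = Finset.univ := by
      intro hall
      exact hb (funext fun s => hall s)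
    rw [if_neg hnot, ite_self]

end Aux

section Radio

variable {n : ℕ}

lemma singleEdge_radioCoverFrom (hn : 2 ≤ n) (h0 : 0 < n) (v : Fin n) :
    (singleEdgeHG n h0).radioCoverFrom v = 1 := by
  unfold FinHypergraph.radioCoverFrom
  have hzero : ∀ t : ℕ, t ≠ 0 →
      (singleEdgeHG n h0).pr v t
        (fun w => ∃ u : Fin n, u ≠ v ∧ ∀ s : Fin t, u ∉ (w s).1) = 0 := by
    intro t ht
    rw [singleEdge_pr]
    apply Finset.sum_eq_zero
    intro x _
    rw [if_neg]
    rintro ⟨u, -, hu⟩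
    exact hu ⟨0, Nat.pos_of_ne_zero ht⟩ (Finset.mem_univ u)
  rw [tsum_eq_single 0 hzero, singleEdge_pr]
  have hA : (∃ u : Fin n, u ≠ v ∧ ∀ s : Fin 0,
      u ∉ ((fun s : Fin 0 => ((Finset.univ : Finset (Fin n)), (default : Fin 0 → Fin n) s)) s).1) := by
    obtain ⟨u, hu⟩ := Fintype.exists_ne_of_one_lt_card (by simp; omega) v
    exact ⟨u, hu, fun s => absurd s.2 (by omega)⟩
  rw [Fintype.sum_eq_single (default : Fin 0 → Fin n) (fun b hb => absurd (Subsingleton.elim b default) hb)]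
  rw [if_pos hA, pow_zero]

lemma singleEdge_radioCoverTime (hn : 2 ≤ n) (h0 : 0 < n) :
    (singleEdgeHG n h0).radioCoverTime = 1 := by
  haveI : Nonempty (Fin n) := Fin.pos_iff_nonempty.mp h0
  unfold FinHypergraph.radioCoverTime
  rw [iSup_congr (fun v => singleEdge_radioCoverFrom hn h0 v), iSup_const]

end Radio

section Counting

variable {n : ℕ}

lemma avoid_count (t : ℕ) (S : Finset (Fin n)) :
    (Finset.univ.filter fun x : Fin t → Fin n => ∀ i, x i ∉ S).card = (n - S.card) ^ t := by
  have h : (Finset.univ.filter fun x : Fin t → Fin n => ∀ i, x i ∉ S)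
      = Fintype.piFinset (fun _ : Fin t => Sᶜ) := by
    ext x
    simp [Fintype.mem_piFinset]
  rw [h, Fintype.card_piFinset]
  simp [Finset.card_compl]

lemma count_formula (hn : 2 ≤ n) (v : Fin n) (t : ℕ) :
    ((Finset.univ.filter fun x : Fin t → Fin n =>
        ∃ u, u ≠ v ∧ ∀ i : Fin t, x i ≠ u).card : ℝ) =
      ∑ i ∈ Finset.range (n - 1),
        (-1 : ℝ) ^ i * ((n - 1).choose (i + 1)) * ((n : ℝ) - (i + 1)) ^ t := by
  classical
  set U : Finset (Fin n) := Finset.univ.erase v with hU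
  have hUcard : U.card = n - 1 := by
    rw [hU, Finset.card_erase_of_mem (Finset.mem_univ v), Finset.card_univ, Fintype.card_fin]
  -- pointwise inclusion-exclusion
  have point : ∀ x : Fin t → Fin n,
      (if ∃ u, u ≠ v ∧ ∀ i : Fin t, x i ≠ u then (1 : ℝ) else 0)
        = 1 - ∑ S ∈ U.powerset, (-1 : ℝ) ^ S.card * (if ∀ i, x i ∉ S then 1 else 0) := by
    intro x
    have expand : ∑ S ∈ U.powerset, (-1 : ℝ) ^ S.card * (if ∀ i, x i ∉ S then 1 else 0)
        = ∏ u ∈ U, ((-(if ∀ i : Fin t, x i ≠ u then (1 : ℝ) else 0)) + 1) := by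
      rw [Finset.prod_add]
      apply Finset.sum_congr rfl
      intro S hS
      rw [Finset.prod_const_one, mul_one]
      have hiff : (∀ i, x i ∉ S) ↔ ∀ u ∈ S, ∀ i : Fin t, x i ≠ u :=
        ⟨fun h u hu i hxi => h i (hxi ▸ hu), fun h i hi => h (x i) hi i rfl⟩
      by_cases hall : ∀ u ∈ S, ∀ i : Fin t, x i ≠ u
      · rw [if_pos (hiff.mpr hall), mul_one]
        rw [Finset.prod_congr rfl (fun u hu => by rw [if_pos (hall u hu)])]
        simp
      · rw [if_neg (fun h => hall (hiff.mp h)), mul_zero]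
        push_neg at hall
        obtain ⟨u, hu, i, hi⟩ := hall
        exact (Finset.prod_eq_zero hu
          (by rw [if_neg (fun hc => hc i hi), neg_zero])).symm
    rw [expand]
    by_cases h : ∃ u, u ≠ v ∧ ∀ i : Fin t, x i ≠ u
    · rw [if_pos h]
      obtain ⟨u, huv, hmiss⟩ := h
      rw [Finset.prod_eq_zero (Finset.mem_erase.mpr ⟨huv, Finset.mem_univ u⟩)
        (by rw [if_pos hmiss]; ring)]
      ring
    · rw [if_neg h]
      push_neg at h
      rw [Finset.prod_congr rfl (fun u hu => by
        rw [if_neg, neg_zero, zero_add]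
        obtain ⟨i, hi⟩ := h u (Finset.mem_erase.mp hu).1
        exact fun hc => hc i hi)]
      simp
  -- sum over x
  rw [← Finset.sum_boole]
  calc (∑ x : Fin t → Fin n, if ∃ u, u ≠ v ∧ ∀ i : Fin t, x i ≠ u then (1:ℝ) else 0)
      = ∑ x : Fin t → Fin n,
          (1 - ∑ S ∈ U.powerset, (-1 : ℝ) ^ S.card * (if ∀ i, x i ∉ S then 1 else 0)) := by
        exact Finset.sum_congr rfl fun x _ => point x
    _ = (n : ℝ) ^ t - ∑ S ∈ U.powerset, (-1 : ℝ) ^ S.card * ((n - S.card : ℕ) : ℝ) ^ t := by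
        rw [Finset.sum_sub_distrib, Finset.sum_const, Finset.card_univ, Fintype.card_fun,
          Fintype.card_fin, Fintype.card_fin, Finset.sum_comm,
          nsmul_eq_mul, mul_one, Nat.cast_pow]
        congr 1
        apply Finset.sum_congr rfl
        intro S _
        rw [← Finset.mul_sum, Finset.sum_boole, avoid_count]
        push_cast
        ring
    _ = (n : ℝ) ^ t - ∑ j ∈ Finset.range (n - 1 + 1),
          ((n-1).choose j : ℝ) * ((-1 : ℝ) ^ j * ((n - j : ℕ) : ℝ) ^ t) := by
        rw [Finset.sum_powerset]
        rw [hUcard]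
        congr 1
        apply Finset.sum_congr rfl
        intro j hj
        rw [Finset.sum_congr rfl (fun S hS => by
          rw [(Finset.mem_powersetCard.mp hS).2]), Finset.sum_const, nsmul_eq_mul,
          Finset.card_powersetCard, hUcard]
    _ = ∑ i ∈ Finset.range (n - 1),
          (-1 : ℝ) ^ i * ((n - 1).choose (i + 1)) * ((n : ℝ) - (i + 1)) ^ t := by
        rw [Finset.sum_range_succ']
        have hA : ∑ i ∈ Finset.range (n-1),
              ((n-1).choose (i+1) : ℝ) * ((-1:ℝ)^(i+1) * ((n - (i+1) : ℕ) : ℝ)^t)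
            = - ∑ i ∈ Finset.range (n-1),
              (-1:ℝ)^i * ((n-1).choose (i+1)) * ((n:ℝ) - (i+1))^t := by
          rw [← Finset.sum_neg_distrib]
          apply Finset.sum_congr rfl
          intro i hi
          have hle : i + 1 ≤ n := by
            have := Finset.mem_range.mp hi; omega
          rw [Nat.cast_sub hle]
          push_cast
          ring
        rw [hA]
        simp only [Nat.choose_zero_right, Nat.cast_one, pow_zero, one_mul, Nat.sub_zero]
        ring

end Counting

section Analysis

lemma alt_choose_sum (m : ℕ) :
    ∑ i ∈ Finset.range (m + 1), (-1 : ℝ) ^ i * ((m + 1).choose (i + 1)) = 1 := by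
  have h0 : (∑ i ∈ Finset.range (m + 2), (-1 : ℤ) ^ i * ((m + 1).choose i)) = 0 :=
    Int.alternating_sum_range_choose_of_ne (Nat.succ_ne_zero m)
  have h1 : (∑ i ∈ Finset.range (m + 2), (-1 : ℝ) ^ i * ((m + 1).choose i)) = 0 := by
    have := congrArg (fun z : ℤ => (z : ℝ)) h0
    push_cast at this
    convert this using 2
  rw [Finset.sum_range_succ'] at h1
  have h2 : ∑ i ∈ Finset.range (m + 1), (-1 : ℝ) ^ (i + 1) * ((m + 1).choose (i + 1))
      = - ∑ i ∈ Finset.range (m + 1), (-1 : ℝ) ^ i * ((m + 1).choose (i + 1)) := by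
    rw [← Finset.sum_neg_distrib]
    exact Finset.sum_congr rfl fun i _ => by ring
  rw [h2] at h1
  simp at h1
  linarith

lemma key_identity (m : ℕ) :
    ∑ i ∈ Finset.range m, (-1 : ℝ) ^ i * ((m.choose (i + 1)) : ℝ) / (i + 1) =
      ∑ i ∈ Finset.range m, 1 / ((i : ℝ) + 1) := by
  induction m with
  | zero => simp
  | succ m ih =>
    have pascal : ∀ i : ℕ, (((m + 1).choose (i + 1) : ℕ) : ℝ)
        = ((m.choose i : ℕ) : ℝ) + ((m.choose (i + 1) : ℕ) : ℝ) := by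
      intro i
      exact_mod_cast congrArg (Nat.cast : ℕ → ℝ) (Nat.choose_succ_succ m i)
    have split : ∑ i ∈ Finset.range (m + 1), (-1 : ℝ) ^ i * (((m+1).choose (i + 1)) : ℝ) / (i + 1)
        = (∑ i ∈ Finset.range (m + 1), (-1 : ℝ) ^ i * ((m.choose (i + 1)) : ℝ) / (i + 1))
          + ∑ i ∈ Finset.range (m + 1), (-1 : ℝ) ^ i * ((m.choose i) : ℝ) / (i + 1) := by
      rw [← Finset.sum_add_distrib]
      apply Finset.sum_congr rfl
      intro i _
      rw [pascal]
      ring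
    have first : ∑ i ∈ Finset.range (m + 1), (-1 : ℝ) ^ i * ((m.choose (i + 1)) : ℝ) / (i + 1)
        = ∑ i ∈ Finset.range m, (-1 : ℝ) ^ i * ((m.choose (i + 1)) : ℝ) / (i + 1) := by
      rw [Finset.sum_range_succ, Nat.choose_succ_self]
      simp
    have second : ∑ i ∈ Finset.range (m + 1), (-1 : ℝ) ^ i * ((m.choose i) : ℝ) / (i + 1)
        = 1 / ((m : ℝ) + 1) := by
      have hterm : ∀ i : ℕ, (-1 : ℝ) ^ i * ((m.choose i) : ℝ) / (i + 1)
          = ((-1 : ℝ) ^ i * (((m+1).choose (i + 1)) : ℝ)) / ((m : ℝ) + 1) := by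
        intro i
        have hc : ((m : ℝ) + 1) * ((m.choose i) : ℝ)
            = (((m+1).choose (i + 1)) : ℝ) * ((i : ℝ) + 1) := by
          exact_mod_cast congrArg (Nat.cast : ℕ → ℝ) (Nat.add_one_mul_choose_eq m i)
        have hi1 : ((i : ℝ) + 1) ≠ 0 := by positivity
        have hm1 : ((m : ℝ) + 1) ≠ 0 := by positivity
        field_simp
        linear_combination hc
      rw [Finset.sum_congr rfl (fun i _ => hterm i), ← Finset.sum_div, alt_choose_sum]
    rw [split, first, second, ih, Finset.sum_range_succ]

end Analysis

section Assemble

variable {n : ℕ}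

/-- `P(some vertex ≠ v unvisited after t uniform draws)` as a real number. -/
noncomputable def pReal (n t : ℕ) : ℝ :=
  ∑ i ∈ Finset.range (n - 1),
    (-1 : ℝ) ^ i * ((n - 1).choose (i + 1)) * (((n : ℝ) - (i + 1)) / n) ^ t

lemma r_nonneg (hn : 2 ≤ n) {i : ℕ} (hi : i ∈ Finset.range (n - 1)) :
    0 ≤ ((n : ℝ) - (i + 1)) / n := by
  have hi' := Finset.mem_range.mp hi
  have h1 : (i : ℝ) + 1 ≤ (n : ℝ) := by
    have : i + 1 ≤ n := by omega
    exact_mod_cast this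
  have h2 : (0 : ℝ) ≤ n := by positivity
  exact div_nonneg (by linarith) h2

lemma r_lt_one (hn : 2 ≤ n) {i : ℕ} (hi : i ∈ Finset.range (n - 1)) :
    ((n : ℝ) - (i + 1)) / n < 1 := by
  have h2 : (0 : ℝ) < n := by
    have : 0 < n := by omega
    exact_mod_cast this
  rw [div_lt_one h2]
  have : (0 : ℝ) < (i : ℝ) + 1 := by positivity
  linarith

lemma pReal_eq (hn : 2 ≤ n) (v : Fin n) (t : ℕ) :
    pReal n t = ((Finset.univ.filter fun x : Fin t → Fin n =>
        ∃ u, u ≠ v ∧ ∀ i : Fin t, x i ≠ u).card : ℝ) * ((n : ℝ)⁻¹) ^ t := by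
  rw [count_formula hn v t, Finset.sum_mul]
  apply Finset.sum_congr rfl
  intro i _
  rw [div_eq_mul_inv, mul_pow, ← mul_assoc]

lemma pReal_nonneg (hn : 2 ≤ n) (t : ℕ) : 0 ≤ pReal n t := by
  classical
  rw [pReal_eq hn (⟨0, by omega⟩ : Fin n) t]
  positivity

lemma summable_pReal (hn : 2 ≤ n) : Summable (pReal n) := by
  apply summable_sum
  intro i hi
  exact (summable_geometric_of_lt_one (r_nonneg hn hi) (r_lt_one hn hi)).mul_left _

lemma tsum_pReal (hn : 2 ≤ n) :
    ∑' t : ℕ, pReal n t = (n : ℝ) * ∑ i ∈ Finset.range (n - 1), (1 : ℝ) / (i + 1) := by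
  have hnR : (0 : ℝ) < n := by
    have : 0 < n := by omega
    exact_mod_cast this
  unfold pReal
  rw [Summable.tsum_finsetSum (fun i hi =>
    (summable_geometric_of_lt_one (r_nonneg hn hi) (r_lt_one hn hi)).mul_left _)]
  have hterm : ∀ i ∈ Finset.range (n - 1),
      (∑' t : ℕ, (-1 : ℝ) ^ i * ((n - 1).choose (i + 1)) * (((n : ℝ) - (i + 1)) / n) ^ t)
        = (n : ℝ) * ((-1 : ℝ) ^ i * ((n - 1).choose (i + 1)) / (i + 1)) := by
    intro i hi
    rw [tsum_mul_left, tsum_geometric_of_lt_one (r_nonneg hn hi) (r_lt_one hn hi)]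
    have h1 : 1 - ((n : ℝ) - (i + 1)) / n = ((i : ℝ) + 1) / n := by
      field_simp
      ring
    rw [h1, inv_div]
    have hi1 : ((i : ℝ) + 1) ≠ 0 := by positivity
    field_simp
  rw [Finset.sum_congr rfl hterm, ← Finset.mul_sum]
  congr 1
  rw [key_identity]

end Assemble

section Final

variable {n : ℕ}

lemma event_iff (v : Fin n) (t : ℕ) (x : Fin t → Fin n) :
    (∃ u : Fin n, ∀ s : ℕ, s ≤ t →
        FinHypergraph.vAt v (fun s => ((Finset.univ : Finset (Fin n)), x s)) s ≠ u)
      ↔ (∃ u, u ≠ v ∧ ∀ i : Fin t, x i ≠ u) := by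
  constructor
  · rintro ⟨u, hu⟩
    refine ⟨u, Ne.symm (hu 0 (Nat.zero_le t)), fun i => ?_⟩
    have hlt := i.isLt
    have h := hu ((i : ℕ) + 1) (by omega)
    have hv : FinHypergraph.vAt v (fun s => ((Finset.univ : Finset (Fin n)), x s)) ((i : ℕ) + 1)
        = x i := by
      show (if h : (i : ℕ) < t then x ⟨(i : ℕ), h⟩ else v) = x i
      rw [dif_pos hlt]
    rwa [hv] at h
  · rintro ⟨u, huv, hx⟩
    refine ⟨u, ?_⟩
    intro s hs
    match s with
    | 0 => exact fun h => huv h.symm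
    | s + 1 =>
      have hlt : s < t := by omega
      show (if h : s < t then x ⟨s, h⟩ else v) ≠ u
      rw [dif_pos hlt]
      exact hx _

lemma pr_cover_eq (hn : 2 ≤ n) (h0 : 0 < n) (v : Fin n) (t : ℕ) :
    (singleEdgeHG n h0).pr v t
        (fun w => ∃ u : Fin n, ∀ s : ℕ, s ≤ t → FinHypergraph.vAt v w s ≠ u)
      = ENNReal.ofReal (pReal n t) := by
  rw [singleEdge_pr]
  refine Eq.trans (Finset.sum_congr rfl fun x _ => ite_congr (propext (event_iff v t x)) (fun _ => rfl) (fun _ => rfl)) ?_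
  rw [← Finset.sum_filter, Finset.sum_const, nsmul_eq_mul]
  have hinv : ((n : ℝ≥0∞))⁻¹ = ENNReal.ofReal ((n : ℝ)⁻¹) := by
    rw [ENNReal.ofReal_inv_of_pos (by exact_mod_cast h0), ENNReal.ofReal_natCast]
  rw [hinv, ← ENNReal.ofReal_pow (by positivity), ← ENNReal.ofReal_natCast,
    ← ENNReal.ofReal_mul (by positivity)]
  rw [pReal_eq hn v t]

lemma coverFrom_single (hn : 2 ≤ n) (h0 : 0 < n) (v : Fin n) :
    (singleEdgeHG n h0).coverFrom v
      = ENNReal.ofReal ((n : ℝ) * ∑ i ∈ Finset.range (n - 1), (1 : ℝ) / (i + 1)) := by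
  unfold FinHypergraph.coverFrom
  rw [tsum_congr (fun t => pr_cover_eq hn h0 v t),
    ← ENNReal.ofReal_tsum_of_nonneg (pReal_nonneg hn) (summable_pReal hn),
    tsum_pReal hn]

end Final


/-- For `n ≥ 2`, the hypergraph on `{1, …, n}` with the single hyperedge
`V` has radio cover time exactly `1` and cover time exactly `n · H_{n-1}`, where
`H_{n-1} = ∑_{i=1}^{n-1} 1/i`; in particular the `O(n log n)` bound on the radio speedup
of the cover time is tight. -/
theorem singleEdge_cover_times (n : ℕ) (hn : 2 ≤ n) :
    (singleEdgeHG n (by omega)).radioCoverTime = 1 ∧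
    (singleEdgeHG n (by omega)).coverTime =
      ENNReal.ofReal ((n : ℝ) * ∑ i ∈ Finset.range (n - 1), (1 : ℝ) / (i + 1)) := by
  have h0 : 0 < n := by omega
  haveI : Nonempty (Fin n) := Fin.pos_iff_nonempty.mp h0
  refine ⟨singleEdge_radioCoverTime hn _, ?_⟩
  unfold FinHypergraph.coverTime
  rw [iSup_congr (fun v => coverFrom_single hn _ v), iSup_const]
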